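/- Let p be a prime, R a commutative ring of characteristic p, σ a finite index type, and n : σ →₀ ℕ with 0 < |n| < p, where |n| = Σ i, n i. Then D_n(f^p) = 0 for every f ∈ MvPolynomial σ R. -/

import Mathlib

/-- The divided-power operator `D_n` on `MvPolynomial σ R`, determined on monomials by
`D_n (X ^ m) = (∏ i, Nat.choose (m i) (n i)) • X ^ (m - n)` (componentwise truncated
subtraction). -/
noncomputable def dpOp (R : Type*) [CommRing R] (σ : Type*) [Fintype σ] (n : σ →₀ ℕ) :
    MvPolynomial σ R →ₗ[R] MvPolynomial σ R :=
  (Finsupp.lsum ℕ fun m : σ →₀ ℕ =>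
    (∏ i, Nat.choose (m i) (n i)) • (MvPolynomial.monomial (m - n) : R →ₗ[R] MvPolynomial σ R))
    ∘ₗ (AddMonoidAlgebra.coeffLinearEquiv R).toLinearMap

lemma dpOp_monomial (R : Type*) [CommRing R] (σ : Type*) [Fintype σ] (n m : σ →₀ ℕ) (b : R) :
    dpOp R σ n (MvPolynomial.monomial m b)
      = (∏ i, Nat.choose (m i) (n i)) • MvPolynomial.monomial (m - n) b := by
  rw [dpOp, LinearMap.comp_apply, ← MvPolynomial.single_eq_monomial]
  change ((Finsupp.lsum ℕ) fun m' : σ →₀ ℕ => (∏ i, Nat.choose (m' i) (n i)) •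
    (MvPolynomial.monomial (m' - n) : R →ₗ[R] MvPolynomial σ R)) (Finsupp.single m b) = _
  erw [Finsupp.lsum_single]
  simp

/-- In characteristic `p`, the divided-power operator `D_n` with `0 < |n| < p` kills
`p`-th powers. -/
theorem dpOp_pow_p_eq_zero (p : ℕ) (hp : p.Prime) (R : Type*) [CommRing R] [CharP R p]
    (σ : Type*) [Fintype σ] (n : σ →₀ ℕ) (h0 : 0 < ∑ i, n i) (hlt : ∑ i, n i < p)
    (f : MvPolynomial σ R) :
    dpOp R σ n (f ^ p) = 0 := by
  haveI : Fact p.Prime := ⟨hp⟩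
  obtain ⟨i0, hi0⟩ : ∃ i, n i ≠ 0 := by
    by_contra h
    push_neg at h
    simp [h] at h0
  have hni0 : n i0 < p :=
    lt_of_le_of_lt (Finset.single_le_sum (fun i _ => Nat.zero_le _) (Finset.mem_univ i0)) hlt
  have key : ∀ m : ℕ, p ∣ Nat.choose (p * m) (n i0) := by
    intro m
    have h := (Choose.choose_modEq_choose_mod_mul_choose_div_nat
      (n := p * m) (k := n i0) (p := p))
    rw [Nat.mul_mod_right, Nat.mod_eq_of_lt hni0, Nat.choose_eq_zero_of_lt
      (Nat.pos_of_ne_zero hi0), zero_mul] at h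
    exact (Nat.modEq_zero_iff_dvd).mp h
  conv_lhs => rw [f.as_sum, sum_pow_char]
  rw [map_sum]
  refine Finset.sum_eq_zero fun m hm => ?_
  rw [MvPolynomial.monomial_pow, dpOp_monomial]
  have hdvd : p ∣ ∏ i, Nat.choose ((p • m) i) (n i) := by
    have h1 : Nat.choose ((p • m) i0) (n i0) ∣ ∏ i, Nat.choose ((p • m) i) (n i) :=
      Finset.dvd_prod_of_mem _ (Finset.mem_univ i0)
    have h2 : (p • m) i0 = p * m i0 := by simp
    rw [h2] at h1
    exact (key (m i0)).trans h1
  obtain ⟨c, hc⟩ := hdvd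
  rw [hc, mul_comm, mul_smul]
  simp [nsmul_eq_mul, CharP.cast_eq_zero (MvPolynomial σ R) p]
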